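/- Euclidean version of Proposition 3.10: let o, x, y, z be points in the Euclidean plane with o ∉ {x,y,z}. If π ≤ ∠yox + ∠xoz, then ‖y - o‖ + ‖o - z‖ ≤ ‖y - x‖ + ‖x - z‖. -/
import Mathlib


open EuclideanGeometry Real

private lemma aux_sq_le {a b : ℝ} (hb : 0 ≤ b) (h : a ^ 2 ≤ b ^ 2) : a ≤ b := by
  nlinarith

private lemma aux_real {p q r c c1 d1 d2 : ℝ} (hp : 0 ≤ p) (hq : 0 ≤ q) (hr : 0 ≤ r)
    (hc1 : -1 ≤ c) (hc2 : c ≤ 1) (hcos : c1 ≤ -c)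
    (hd1 : 0 ≤ d1) (hd2 : 0 ≤ d2)
    (law1 : d1 * d1 = p * p + r * r - 2 * p * r * c1)
    (law2 : d2 * d2 = r * r + q * q - 2 * r * q * c) :
    p + q ≤ d1 + d2 := by
  have h1c : (0:ℝ) ≤ 1 - c ^ 2 := by nlinarith
  have hsq1 : (p + r * c) ^ 2 ≤ d1 ^ 2 := by
    nlinarith [mul_le_mul_of_nonneg_left hcos (mul_nonneg hp hr),
      mul_nonneg (mul_nonneg hr hr) h1c]
  have hsq2 : (q - r * c) ^ 2 ≤ d2 ^ 2 := by
    nlinarith [mul_nonneg (mul_nonneg hr hr) h1c]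
  have h1 := aux_sq_le hd1 hsq1
  have h2 := aux_sq_le hd2 hsq2
  linarith

theorem stmt_6 (o x y z : EuclideanSpace ℝ (Fin 2))
    (hox : o ≠ x) (hoy : o ≠ y) (hoz : o ≠ z)
    (h : π ≤ ∠ y o x + ∠ x o z) :
    ‖y - o‖ + ‖o - z‖ ≤ ‖y - x‖ + ‖x - z‖ := by
  have law1 := EuclideanGeometry.law_cos y o x
  have law2 := EuclideanGeometry.law_cos x o z
  have ha1 : ∠ y o x ≤ π := EuclideanGeometry.angle_le_pi y o x
  have ha2 : ∠ x o z ≤ π := EuclideanGeometry.angle_le_pi x o z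
  have ha1' : 0 ≤ ∠ y o x := EuclideanGeometry.angle_nonneg y o x
  have ha2' : 0 ≤ ∠ x o z := EuclideanGeometry.angle_nonneg x o z
  have hcos : Real.cos (∠ y o x) ≤ - Real.cos (∠ x o z) := by
    have hle : π - ∠ x o z ≤ ∠ y o x := by linarith
    calc Real.cos (∠ y o x) ≤ Real.cos (π - ∠ x o z) :=
          Real.cos_le_cos_of_nonneg_of_le_pi (by linarith) ha1 hle
      _ = - Real.cos (∠ x o z) := Real.cos_pi_sub _
  have key := aux_real (dist_nonneg : (0:ℝ) ≤ dist y o)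
    (dist_nonneg : (0:ℝ) ≤ dist z o) (dist_nonneg : (0:ℝ) ≤ dist x o)
    (Real.neg_one_le_cos _) (Real.cos_le_one _) hcos
    (dist_nonneg : (0:ℝ) ≤ dist y x) (dist_nonneg : (0:ℝ) ≤ dist x z)
    law1 (by linarith [law2])
  have e1 : dist y o = ‖y - o‖ := dist_eq_norm _ _
  have e2 : dist z o = ‖o - z‖ := by rw [dist_eq_norm, norm_sub_rev]
  have e3 : dist y x = ‖y - x‖ := dist_eq_norm _ _
  have e4 : dist x z = ‖x - z‖ := dist_eq_norm _ _
  linarith
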